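/- Let 0 < p ≤ 1. In the Yule growth with binomial catastrophe scheme, the mean number of survivors E(N) = ∑_{n=1}^∞ n ∫₀^∞ e^{-t} ( ∑_{j=n}^∞ e^{-λt}(1-e^{-λt})^{j-1} C(j,n) p^n (1-p)^{j-n} ) dt satisfies: if 0 < λ < 1 then E(N) = p/(1-λ), and if λ ≥ 1 then the sum diverges to infinity. -/

import Mathlib

open MeasureTheory Real Filter

private lemma integral_exp_neg_mul_Ioi_aux {c : ℝ} (hc : 0 < c) :
    ∫ t in Set.Ioi (0:ℝ), Real.exp (-(c * t)) = 1 / c := by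
  have hderiv : ∀ x ∈ Set.Ici (0:ℝ), HasDerivAt (fun t : ℝ => -(Real.exp (-(c * t)) / c))
      (Real.exp (-(c * x))) x := by
    intro x _
    have h1 : HasDerivAt (fun t : ℝ => -(c * t)) (-c) x := by
      simpa using ((hasDerivAt_id x).const_mul c).fun_neg
    have h2 := ((h1.exp).div_const c).fun_neg
    convert h2 using 1
    · rfl
    · rfl
    field_simp
  have htend : Tendsto (fun t : ℝ => -(Real.exp (-(c * t)) / c)) atTop (nhds 0) := by
    have h3 : Tendsto (fun t : ℝ => -(c * t)) atTop atBot :=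
      tendsto_neg_atBot_iff.2 (tendsto_id.const_mul_atTop hc)
    have h4 := ((Real.tendsto_exp_atBot.comp h3).div_const c).neg
    simpa using h4
  have hint : IntegrableOn (fun x : ℝ => Real.exp (-(c * x))) (Set.Ioi 0) := by
    have := exp_neg_integrableOn_Ioi 0 hc
    simpa [neg_mul] using this
  have h := integral_Ioi_of_hasDerivAt_of_tendsto' hderiv hint htend
  rw [h]
  norm_num

/-- The mean number of survivors in the Yule growth (rate `l`) with binomial
catastrophe (parameter `p`) scheme: `E(N) = p/(1-λ)` if `λ < 1`, and the series
defining `E(N)` diverges to infinity if `λ ≥ 1`.  The outer sum over `n ≥ 1` is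
written by reindexing `n = m + 1`, and the inner sum over `j ≥ n` by `j = k + n`. -/
theorem yule_binomial_mean_survivors (l p : ℝ) (hl : 0 < l) (hp0 : 0 < p) (hp1 : p ≤ 1) :
    (l < 1 →
      ∑' m : ℕ, ((m : ℝ) + 1) *
        ∫ t in Set.Ioi (0:ℝ), Real.exp (-t) *
          ∑' k : ℕ, Real.exp (-(l * t)) * (1 - Real.exp (-(l * t))) ^ (k + m) *
            ((k + m + 1).choose (m + 1) : ℝ) * p ^ (m + 1) * (1 - p) ^ k
        = p / (1 - l)) ∧
    (1 ≤ l →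
      Tendsto (fun M : ℕ => ∑ m ∈ Finset.range M, ((m : ℝ) + 1) *
        ∫ t in Set.Ioi (0:ℝ), Real.exp (-t) *
          ∑' k : ℕ, Real.exp (-(l * t)) * (1 - Real.exp (-(l * t))) ^ (k + m) *
            ((k + m + 1).choose (m + 1) : ℝ) * p ^ (m + 1) * (1 - p) ^ k)
        atTop atTop) := by
  -- notation
  set e : ℝ → ℝ := fun t => Real.exp (-(l * t)) with he_def
  set D : ℝ → ℝ := fun t => 1 - (1 - e t) * (1 - p) with hD_def
  set g : ℕ → ℝ → ℝ := fun m t =>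
    ((m : ℝ) + 1) * (Real.exp (-t) * (e t * (1 - e t) ^ m * p ^ (m + 1) / (D t) ^ (m + 2)))
    with hg_def
  have he0 : ∀ t, 0 < e t := fun t => Real.exp_pos _
  have he1 : ∀ t ∈ Set.Ioi (0:ℝ), e t < 1 := by
    intro t ht
    have : -(l * t) < 0 := by nlinarith [ht.out]
    simpa [he_def] using Real.exp_lt_one_iff.2 this
  have hD_ge : ∀ t ∈ Set.Ioi (0:ℝ), p ≤ D t := by
    intro t ht
    have h1 : 1 - e t ≤ 1 := by have := he0 t; linarith
    have h2 : 0 ≤ 1 - e t := by have := he1 t ht; linarith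
    have h3 : (1 - e t) * (1 - p) ≤ 1 - p := by nlinarith
    simp only [hD_def]; linarith
  have hD_pos : ∀ t, 0 < D t := by
    intro t
    rcases le_or_gt (e t) 1 with h | h
    · have h2 : 0 ≤ 1 - e t := by linarith
      have h3 : (1 - e t) * (1 - p) ≤ (1 - e t) * 1 := by nlinarith
      have := he0 t
      simp only [hD_def]; nlinarith
    · have : (1 - e t) * (1 - p) ≤ 0 := mul_nonpos_of_nonpos_of_nonneg (by linarith) (by linarith)
      simp only [hD_def]; linarith
  -- inner sum
  have hInner : ∀ m : ℕ, ∀ t ∈ Set.Ioi (0:ℝ),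
      HasSum (fun k : ℕ => e t * (1 - e t) ^ (k + m) * ((k + m + 1).choose (m + 1) : ℝ) *
          p ^ (m + 1) * (1 - p) ^ k)
        (e t * (1 - e t) ^ m * p ^ (m + 1) / (D t) ^ (m + 2)) := by
    intro m t ht
    have h2 : 0 ≤ 1 - e t := by have := he1 t ht; linarith
    have hr : ‖(1 - e t) * (1 - p)‖ < 1 := by
      rw [Real.norm_eq_abs, abs_of_nonneg (mul_nonneg h2 (by linarith))]
      have : (1 - e t) * (1 - p) ≤ (1 - e t) * 1 := by nlinarith
      have := he0 t; nlinarith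
    have H := (hasSum_choose_mul_geometric_of_norm_lt_one (m + 1) hr).mul_left
      (e t * (1 - e t) ^ m * p ^ (m + 1))
    have hfun : (fun k : ℕ => e t * (1 - e t) ^ (k + m) * ((k + m + 1).choose (m + 1) : ℝ) *
          p ^ (m + 1) * (1 - p) ^ k)
        = fun k : ℕ => (e t * (1 - e t) ^ m * p ^ (m + 1)) *
          (((k + (m + 1)).choose (m + 1) : ℝ) * ((1 - e t) * (1 - p)) ^ k) := by
      funext k
      rw [show k + m + 1 = k + (m + 1) by ring]
      rw [mul_pow, pow_add]
      ring
    rw [hfun]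
    convert H using 1
    · rfl
    have : 1 - (1 - e t) * (1 - p) = D t := rfl
    rw [this, mul_one_div]
  -- outer sum
  have hOuter : ∀ t ∈ Set.Ioi (0:ℝ),
      HasSum (fun m : ℕ => g m t) (p * Real.exp ((l - 1) * t)) := by
    intro t ht
    have h2 : 0 ≤ 1 - e t := by have := he1 t ht; linarith
    have hDp := hD_pos t
    have hDe : D t - p * (1 - e t) = e t := by simp only [hD_def]; ring
    have hs : ‖p * (1 - e t) / D t‖ < 1 := by
      rw [Real.norm_eq_abs, abs_of_nonneg (div_nonneg (mul_nonneg hp0.le h2) hDp.le)]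
      rw [div_lt_one hDp]
      have := he0 t; linarith
    have H := (hasSum_choose_mul_geometric_of_norm_lt_one 1 hs).mul_left
      (Real.exp (-t) * e t * p / (D t) ^ 2)
    have hfun : (fun m : ℕ => g m t)
        = fun m : ℕ => (Real.exp (-t) * e t * p / (D t) ^ 2) *
          (((m + 1).choose 1 : ℝ) * (p * (1 - e t) / D t) ^ m) := by
      funext m
      simp only [hg_def, Nat.choose_one_right, Nat.cast_add, Nat.cast_one]
      rw [div_pow, mul_pow, pow_succ p m]
      have hDm : (D t) ^ (m + 2) = (D t) ^ m * (D t) ^ 2 := by rw [← pow_add]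
      rw [hDm]
      have hDne := (hD_pos t).ne'
      have hDmne : (D t) ^ m ≠ 0 := pow_ne_zero _ hDne
      field_simp
    rw [hfun]
    convert H using 1
    · rfl
    have h1s : 1 - p * (1 - e t) / D t = e t / D t := by
      rw [eq_div_iff hDp.ne', sub_mul, one_mul, div_mul_cancel₀ _ hDp.ne', hDe]
    rw [h1s]
    have hDne := (hD_pos t).ne'
    have hene := (he0 t).ne'
    have hh : Real.exp ((l - 1) * t) = Real.exp (-t) / e t := by
      rw [eq_div_iff hene]
      simp only [he_def]
      rw [← Real.exp_add]
      ring_nf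
    rw [hh]
    field_simp
    ring
    field_simp
  -- nonnegativity and bound of g on Ioi 0
  have hg_nonneg : ∀ m : ℕ, ∀ t ∈ Set.Ioi (0:ℝ), 0 ≤ g m t := by
    intro m t ht
    have h2 : 0 ≤ 1 - e t := by have := he1 t ht; linarith
    have := he0 t
    have := hD_pos t
    simp only [hg_def]
    positivity
  have hg_bound : ∀ m : ℕ, ∀ t ∈ Set.Ioi (0:ℝ),
      g m t ≤ (((m : ℝ) + 1) / p) * Real.exp (-t) := by
    intro m t ht
    have h2 : 0 ≤ 1 - e t := by have := he1 t ht; linarith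
    have h3 : e t ≤ 1 := by have := he1 t ht; linarith
    have hDp := hD_pos t
    have hnum : e t * (1 - e t) ^ m * p ^ (m + 1) ≤ p ^ (m + 1) := by
      have h4 : (1 - e t) ^ m ≤ 1 := pow_le_one₀ h2 (by have := he0 t; linarith)
      have h5 : e t * (1 - e t) ^ m ≤ 1 := by
        calc e t * (1 - e t) ^ m ≤ e t * 1 := mul_le_mul_of_nonneg_left h4 (he0 t).le
          _ = e t := mul_one _
          _ ≤ 1 := h3
      calc e t * (1 - e t) ^ m * p ^ (m + 1)
          ≤ 1 * p ^ (m + 1) := mul_le_mul_of_nonneg_right h5 (pow_pos hp0 (m + 1)).le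
        _ = p ^ (m + 1) := one_mul _
    have hden : p ^ (m + 2) ≤ (D t) ^ (m + 2) := pow_le_pow_left₀ hp0.le (hD_ge t ht) _
    have hkey : e t * (1 - e t) ^ m * p ^ (m + 1) / (D t) ^ (m + 2) ≤ 1 / p := by
      have h6 : e t * (1 - e t) ^ m * p ^ (m + 1) / (D t) ^ (m + 2)
          ≤ p ^ (m + 1) / p ^ (m + 2) :=
        div_le_div₀ (by positivity) hnum (by positivity) hden
      have h7 : p ^ (m + 1) / p ^ (m + 2) = 1 / p := by
        rw [pow_succ p (m + 1)]
        field_simp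
      linarith [h6, h7.le, h7.ge]
    simp only [hg_def]
    have hexp := Real.exp_pos (-t)
    calc ((m : ℝ) + 1) * (Real.exp (-t) * (e t * (1 - e t) ^ m * p ^ (m + 1) / (D t) ^ (m + 2)))
        ≤ ((m : ℝ) + 1) * (Real.exp (-t) * (1 / p)) := by
          apply mul_le_mul_of_nonneg_left _ (by positivity)
          exact mul_le_mul_of_nonneg_left hkey hexp.le
      _ = (((m : ℝ) + 1) / p) * Real.exp (-t) := by ring
  -- continuity of g m
  have hg_cont : ∀ m : ℕ, Continuous (g m) := by
    intro m
    have hec : Continuous e := Real.continuous_exp.comp (continuous_const.mul continuous_id).neg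
    have hDc : Continuous D :=
      continuous_const.sub ((continuous_const.sub hec).mul continuous_const)
    have hexpc : Continuous fun t : ℝ => Real.exp (-t) :=
      Real.continuous_exp.comp continuous_neg
    have hnumc : Continuous fun t => e t * (1 - e t) ^ m * p ^ (m + 1) :=
      (hec.mul ((continuous_const.sub hec).pow m)).mul continuous_const
    exact continuous_const.mul (hexpc.mul (hnumc.div (hDc.pow _)
      fun t => pow_ne_zero _ (hD_pos t).ne'))
  -- rewrite the original term
  set L : ℕ → ENNReal := fun m => ∫⁻ t in Set.Ioi (0:ℝ), ENNReal.ofReal (g m t) with hL_def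
  have hF : ∀ m : ℕ, ((m : ℝ) + 1) *
      (∫ t in Set.Ioi (0:ℝ), Real.exp (-t) *
        ∑' k : ℕ, Real.exp (-(l * t)) * (1 - Real.exp (-(l * t))) ^ (k + m) *
          ((k + m + 1).choose (m + 1) : ℝ) * p ^ (m + 1) * (1 - p) ^ k)
      = (L m).toReal := by
    intro m
    have step1 : ((m : ℝ) + 1) *
        (∫ t in Set.Ioi (0:ℝ), Real.exp (-t) *
          ∑' k : ℕ, Real.exp (-(l * t)) * (1 - Real.exp (-(l * t))) ^ (k + m) *
            ((k + m + 1).choose (m + 1) : ℝ) * p ^ (m + 1) * (1 - p) ^ k)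
        = ∫ t in Set.Ioi (0:ℝ), g m t := by
      rw [← integral_const_mul]
      apply setIntegral_congr_fun measurableSet_Ioi
      intro t ht
      have h := (hInner m t ht).tsum_eq
      simp only [hg_def, he_def, hD_def] at h ⊢
      rw [h]
    rw [step1]
    apply integral_eq_lintegral_of_nonneg_ae
    · rw [EventuallyLE, ae_restrict_iff' measurableSet_Ioi]
      exact ae_of_all _ fun t ht => hg_nonneg m t ht
    · exact ((hg_cont m).aestronglyMeasurable)
  -- each L m is finite
  have hexp_int : IntegrableOn (fun t : ℝ => Real.exp (-t)) (Set.Ioi 0) := by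
    have := exp_neg_integrableOn_Ioi 0 (b := 1) one_pos
    simpa [neg_mul] using this
  have hLne : ∀ m : ℕ, L m ≠ ⊤ := by
    intro m
    have hb : L m ≤ ∫⁻ t in Set.Ioi (0:ℝ),
        ENNReal.ofReal ((((m : ℝ) + 1) / p) * Real.exp (-t)) := by
      apply setLIntegral_mono' measurableSet_Ioi
      intro t ht
      exact ENNReal.ofReal_le_ofReal (hg_bound m t ht)
    have hval : ∫⁻ t in Set.Ioi (0:ℝ),
        ENNReal.ofReal ((((m : ℝ) + 1) / p) * Real.exp (-t))
        = ENNReal.ofReal (((m : ℝ) + 1) / p) := by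
      rw [← ofReal_integral_eq_lintegral_ofReal (hexp_int.const_mul _)]
      · rw [integral_const_mul, integral_exp_neg_Ioi_zero, mul_one]
      · rw [EventuallyLE, ae_restrict_iff' measurableSet_Ioi]
        exact ae_of_all _ fun t _ => by positivity
    exact ne_top_of_le_ne_top (by rw [hval]; exact ENNReal.ofReal_ne_top) hb
  -- total sum of L
  have hsumL : ∑' m : ℕ, L m
      = ∫⁻ t in Set.Ioi (0:ℝ), ENNReal.ofReal (p * Real.exp ((l - 1) * t)) := by
    rw [← lintegral_tsum fun m => ((hg_cont m).measurable.ennreal_ofReal).aemeasurable]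
    apply setLIntegral_congr_fun measurableSet_Ioi
    intro t ht
    beta_reduce
    rw [← ENNReal.ofReal_tsum_of_nonneg (fun m => hg_nonneg m t ht) (hOuter t ht).summable,
      (hOuter t ht).tsum_eq]
  constructor
  · -- convergent case
    intro hl1
    have hint : IntegrableOn (fun t : ℝ => p * Real.exp ((l - 1) * t)) (Set.Ioi 0) := by
      have h := (exp_neg_integrableOn_Ioi 0 (b := 1 - l) (by linarith)).const_mul p
      apply MeasureTheory.IntegrableOn.congr_fun h _ measurableSet_Ioi
      intro t _
      simp only
      congr 1
      ring
    have hval : ∫⁻ t in Set.Ioi (0:ℝ), ENNReal.ofReal (p * Real.exp ((l - 1) * t))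
        = ENNReal.ofReal (p / (1 - l)) := by
      rw [← ofReal_integral_eq_lintegral_ofReal hint]
      · congr 1
        have heq : ∀ t : ℝ, p * Real.exp ((l - 1) * t) = p * Real.exp (-((1 - l) * t)) := by
          intro t; congr 2; ring
        rw [setIntegral_congr_fun measurableSet_Ioi fun t _ => heq t]
        rw [integral_const_mul, integral_exp_neg_mul_Ioi_aux (by linarith), mul_one_div]
      · exact ae_of_all _ fun t => by positivity
    have h1 : ∑' m : ℕ, ((m : ℝ) + 1) *
        (∫ t in Set.Ioi (0:ℝ), Real.exp (-t) *
          ∑' k : ℕ, Real.exp (-(l * t)) * (1 - Real.exp (-(l * t))) ^ (k + m) *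
            ((k + m + 1).choose (m + 1) : ℝ) * p ^ (m + 1) * (1 - p) ^ k)
        = ∑' m : ℕ, (L m).toReal := by
      exact tsum_congr hF
    rw [h1, ← ENNReal.tsum_toReal_eq hLne, hsumL, hval,
      ENNReal.toReal_ofReal (by
        have h1l : (0:ℝ) < 1 - l := by linarith
        positivity)]
  · -- divergent case
    intro hl1
    have htop : ∫⁻ t in Set.Ioi (0:ℝ), ENNReal.ofReal (p * Real.exp ((l - 1) * t)) = ⊤ := by
      apply eq_top_iff.2
      calc (⊤ : ENNReal) = ENNReal.ofReal p * volume (Set.Ioi (0:ℝ)) := by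
            rw [Real.volume_Ioi, ENNReal.mul_top (by simp [ENNReal.ofReal_eq_zero]; linarith)]
        _ = ∫⁻ _ in Set.Ioi (0:ℝ), ENNReal.ofReal p := (setLIntegral_const _ _).symm
        _ ≤ _ := by
            apply setLIntegral_mono' measurableSet_Ioi
            intro t ht
            apply ENNReal.ofReal_le_ofReal
            have : (1:ℝ) ≤ Real.exp ((l - 1) * t) :=
              Real.one_le_exp (mul_nonneg (by linarith) ht.out.le)
            calc p = p * 1 := (mul_one p).symm
              _ ≤ p * Real.exp ((l - 1) * t) := mul_le_mul_of_nonneg_left this hp0.le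
    have hf_nonneg : ∀ m : ℕ, (0:ℝ) ≤ (L m).toReal := fun m => ENNReal.toReal_nonneg
    have hnotsum : ¬ Summable (fun m : ℕ => (L m).toReal) := by
      intro hs
      have h1 : ENNReal.ofReal (∑' m : ℕ, (L m).toReal) = ∑' m : ℕ, L m := by
        rw [ENNReal.ofReal_tsum_of_nonneg hf_nonneg hs]
        exact tsum_congr fun m => ENNReal.ofReal_toReal (hLne m)
      rw [hsumL, htop] at h1
      exact ENNReal.ofReal_ne_top h1
    have hdiv := (not_summable_iff_tendsto_nat_atTop_of_nonneg hf_nonneg).1 hnotsum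
    have heqfun : (fun M : ℕ => ∑ m ∈ Finset.range M, ((m : ℝ) + 1) *
        ∫ t in Set.Ioi (0:ℝ), Real.exp (-t) *
          ∑' k : ℕ, Real.exp (-(l * t)) * (1 - Real.exp (-(l * t))) ^ (k + m) *
            ((k + m + 1).choose (m + 1) : ℝ) * p ^ (m + 1) * (1 - p) ^ k)
        = fun M : ℕ => ∑ m ∈ Finset.range M, (L m).toReal := by
      funext M
      exact Finset.sum_congr rfl fun m _ => hF m
    rw [heqfun]
    exact hdiv
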